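/- For all n ≥ 0 and all x, the degenerate Genocchi polynomials satisfy 𝓖_{n,λ}(x+1-λ) = 2n(x-λ)_{n-1,λ} − 𝓖_{n,λ}(x-λ), with the convention that the first term vanishes for n = 0. -/

import Mathlib

/-- The degenerate falling factorial `(x)_{n,λ} = x(x-λ)(x-2λ)⋯(x-(n-1)λ)`. -/
def degFall (l x : ℝ) : ℕ → ℝ
  | 0 => 1
  | n + 1 => degFall l x n * (x - n * l)

/-- The degenerate rising factorial `⟨x⟩_{n,λ} = x(x+λ)(x+2λ)⋯(x+(n-1)λ)`. -/
def degRise (l x : ℝ) : ℕ → ℝ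
  | 0 => 1
  | n + 1 => degRise l x n * (x + n * l)

/-- The degenerate exponential `e_λ^x(t) = Σ (x)_{n,λ} tⁿ/n!` as a formal power series. -/
noncomputable def degExp (l x : ℝ) : PowerSeries ℝ :=
  PowerSeries.mk fun n => degFall l x n / n.factorial

/-- Vandermonde-type convolution for the degenerate falling factorial. -/
lemma degFall_add (l a b : ℝ) : ∀ n : ℕ, degFall l (a + b) n =
    ∑ k ∈ Finset.range (n + 1), (n.choose k : ℝ) * degFall l a k * degFall l b (n - k)
  | 0 => by simp [degFall]
  | n + 1 => by
    rw [degFall, degFall_add l a b n, Finset.sum_mul]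
    have key : ∀ k ∈ Finset.range (n + 1),
        (n.choose k : ℝ) * degFall l a k * degFall l b (n - k) * (a + b - n * l)
        = (n.choose k : ℝ) * (degFall l a (k + 1) * degFall l b (n - k))
          + (n.choose k : ℝ) * (degFall l a k * degFall l b ((n - k) + 1)) := by
      intro k hk
      rw [Finset.mem_range] at hk
      have hk' : k ≤ n := Nat.lt_succ_iff.mp hk
      have hcast : ((n - k : ℕ) : ℝ) = (n : ℝ) - k := by
        push_cast [Nat.cast_sub hk']; ring
      rw [degFall, degFall, hcast]
      ring
    rw [Finset.sum_congr rfl key, Finset.sum_add_distrib]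
    -- rewrite target sum
    rw [Finset.sum_range_succ' _ (n + 1)]
    have S2eq : ∑ k ∈ Finset.range (n + 1),
        (n.choose k : ℝ) * (degFall l a k * degFall l b ((n - k) + 1))
        = (∑ i ∈ Finset.range (n + 1),
            (n.choose (i + 1) : ℝ) * (degFall l a (i + 1) * degFall l b (n - i)))
          + ((n + 1).choose 0 : ℝ) * degFall l a 0 * degFall l b (n + 1 - 0) := by
      rw [Finset.sum_range_succ' (fun k => (n.choose k : ℝ) * (degFall l a k * degFall l b ((n - k) + 1))) n,
        Finset.sum_range_succ]
      simp only [Nat.choose_succ_self, Nat.cast_zero, zero_mul, add_zero]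
      congr 1
      · apply Finset.sum_congr rfl
        intro i hi
        rw [Finset.mem_range] at hi
        have : (n - (i + 1)) + 1 = n - i := by omega
        rw [this]
      · simp [degFall]
    have h1 : ∀ i ∈ Finset.range (n + 1),
        ((n + 1).choose (i + 1) : ℝ) * degFall l a (i + 1) * degFall l b ((n + 1) - (i + 1))
        = (n.choose i : ℝ) * (degFall l a (i + 1) * degFall l b (n - i))
          + (n.choose (i + 1) : ℝ) * (degFall l a (i + 1) * degFall l b (n - i)) := by
      intro i hi
      rw [Nat.choose_succ_succ]
      have : (n + 1) - (i + 1) = n - i := by omega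
      rw [this]
      push_cast
      ring
    rw [Finset.sum_congr rfl h1, Finset.sum_add_distrib, S2eq]
    ring

lemma degExp_add (l a b : ℝ) : degExp l a * degExp l b = degExp l (a + b) := by
  ext n
  rw [PowerSeries.coeff_mul]
  simp only [degExp, PowerSeries.coeff_mk]
  rw [Finset.Nat.sum_antidiagonal_eq_sum_range_succ_mk, degFall_add, Finset.sum_div]
  apply Finset.sum_congr rfl
  intro k hk
  rw [Finset.mem_range] at hk
  have hk' : k ≤ n := Nat.lt_succ_iff.mp hk
  have hch := Nat.choose_mul_factorial_mul_factorial hk'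
  have h1 : (k.factorial : ℝ) ≠ 0 := Nat.cast_ne_zero.mpr k.factorial_ne_zero
  have h2 : ((n - k).factorial : ℝ) ≠ 0 := Nat.cast_ne_zero.mpr (n - k).factorial_ne_zero
  have h3 : (n.factorial : ℝ) ≠ 0 := Nat.cast_ne_zero.mpr n.factorial_ne_zero
  have hch' : (n.choose k : ℝ) * k.factorial * (n - k).factorial = n.factorial := by
    exact_mod_cast congrArg (Nat.cast : ℕ → ℝ) hch
  field_simp
  rw [← hch']
  ring

theorem degGenocchi_shift (l : ℝ) (hl : l ≠ 0) (G : ℕ → ℝ → ℝ)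
    (hG : ∀ x : ℝ, (degExp l 1 + 1) * PowerSeries.mk (fun n => G n x / n.factorial)
        = 2 * PowerSeries.X * degExp l x) (n : ℕ) (x : ℝ) :
    G n (x + 1 - l) = 2 * (n : ℝ) * degFall l (x - l) (n - 1) - G n (x - l) := by
  have h1 := hG (x + 1 - l)
  have h2 := hG (x - l)
  have hE : degExp l (x + 1 - l) = degExp l 1 * degExp l (x - l) := by
    rw [degExp_add]
    congr 1
    ring
  have key : (degExp l 1 + 1) *
      (PowerSeries.mk (fun n => G n (x + 1 - l) / n.factorial)
        + PowerSeries.mk (fun n => G n (x - l) / n.factorial))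
      = (degExp l 1 + 1) * (2 * PowerSeries.X * degExp l (x - l)) := by
    rw [mul_add, h1, h2, hE]
    ring
  have hne : (degExp l 1 + 1) ≠ 0 := by
    intro h
    have := congrArg (PowerSeries.constantCoeff) h
    simp [degExp, degFall, PowerSeries.constantCoeff_mk] at this
  have heq := mul_left_cancel₀ hne key
  have hc := congrArg (PowerSeries.coeff n) heq
  rw [map_add, PowerSeries.coeff_mk, PowerSeries.coeff_mk, two_mul, add_mul, map_add,
    ← two_mul] at hc
  cases n with
  | zero =>
    simp [PowerSeries.coeff_zero_eq_constantCoeff] at hc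
    simp only [Nat.cast_zero, mul_zero, zero_mul]
    simp [degFall]
    linarith
  | succ m =>
    rw [PowerSeries.coeff_succ_X_mul] at hc
    have hcoeff : PowerSeries.coeff m (degExp l (x - l))
        = degFall l (x - l) m / m.factorial := by
      simp [degExp]
    rw [hcoeff] at hc
    have hm : (m.factorial : ℝ) ≠ 0 := Nat.cast_ne_zero.mpr m.factorial_ne_zero
    have hm1 : ((m + 1).factorial : ℝ) ≠ 0 := Nat.cast_ne_zero.mpr (m + 1).factorial_ne_zero
    have hfs : ((m + 1).factorial : ℝ) = (m + 1) * m.factorial := by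
      rw [Nat.factorial_succ]; push_cast; ring
    rw [← add_div, div_eq_iff hm1, hfs] at hc
    have : G (m + 1) (x + 1 - l) + G (m + 1) (x - l)
        = 2 * ((m : ℝ) + 1) * degFall l (x - l) m := by
      have h' : (G (m + 1) (x + 1 - l) + G (m + 1) (x - l)) * m.factorial
          = (2 * ((m : ℝ) + 1) * degFall l (x - l) m) * m.factorial := by
        rw [hc]; field_simp
      exact mul_right_cancel₀ hm h'
    simp only [Nat.add_sub_cancel, Nat.cast_add, Nat.cast_one]
    linarith
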